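/- Let G be a 1-cop-win graph of finite corner rank α > 2. Then for every vertex c of G there exists a vertex r with cr(r) ≥ α−2 such that some c' ∈ F_{α−2}(c) is not adjacent to r (i.e. an (α−2)-proj-safe vertex exists no matter where the cop stands). -/

import Mathlib

open Classical

/-- A finite reflexive graph: adjacency is symmetric and every vertex is
adjacent to itself (closed neighborhood `N[v] = {u | Adj v u}`). -/
structure RefGraph (V : Type*) where
  Adj : V → V → Prop
  symm : ∀ u v, Adj u v → Adj v u
  refl : ∀ v, Adj v v

namespace RefGraph

variable {V : Type*}

/-- `w` strictly corners `v` within the induced subgraph on `S`,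
i.e. `N_S[v] ⊊ N_S[w]`. -/
def StrictCornersIn (G : RefGraph V) (S : Set V) (w v : V) : Prop :=
  w ∈ S ∧ v ∈ S ∧ (∀ u ∈ S, G.Adj v u → G.Adj w u) ∧ ∃ u ∈ S, G.Adj w u ∧ ¬ G.Adj v u

/-- `v` is a strict corner of the induced subgraph on `S`. -/
def IsStrictCorner (G : RefGraph V) (S : Set V) (v : V) : Prop :=
  ∃ w, G.StrictCornersIn S w v

/-- `S` induces a clique. -/
def IsCliqueSet (G : RefGraph V) (S : Set V) : Prop :=
  ∀ u ∈ S, ∀ v ∈ S, G.Adj u v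

/-- `lvl k` is the vertex set of the graph `G_{k+1}` of the corner ranking
procedure: start with all vertices and repeatedly delete all strict corners. -/
def lvl (G : RefGraph V) : ℕ → Set V
  | 0 => Set.univ
  | k + 1 => {v ∈ G.lvl k | ¬ G.IsStrictCorner (G.lvl k) v}

/-- The corner rank of a vertex: the stage (1-indexed) at which it is a strict
corner, or at which the remaining graph is a clique; `∞` if neither ever occurs. -/
noncomputable def cr (G : RefGraph V) (v : V) : ℕ∞ :=
  sInf {n : ℕ∞ | ∃ m : ℕ, n = (m : ℕ∞) + 1 ∧ v ∈ G.lvl m ∧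
    (G.IsStrictCorner (G.lvl m) v ∨ G.IsCliqueSet (G.lvl m))}

/-- The vertex set of `Gₖ`: the vertices of corner rank at least `k`. -/
def GkSet (G : RefGraph V) (k : ℕ) : Set V := {v | (k : ℕ∞) ≤ G.cr v}

/-- The corner rank of the graph: the largest corner rank of a vertex. -/
noncomputable def crGraph (G : RefGraph V) [Fintype V] : ℕ∞ :=
  Finset.univ.sup fun v => G.cr v

/-- The projection map `fₖ` on a single vertex `u` of `Gₖ`. -/
noncomputable def fk (G : RefGraph V) (k : ℕ) (u : V) : Set V :=
  if (k : ℕ∞) < G.cr u then {u}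
  else {w | w ∈ G.GkSet (k + 1) ∧ G.StrictCornersIn (G.GkSet k) w u}

/-- The projection map `Fₖ`: `F₁` is the identity and `Fₖ₊₁ = fₖ ∘ Fₖ`. -/
noncomputable def Fk (G : RefGraph V) : ℕ → V → Set V
  | 0, v => {v}
  | 1, v => {v}
  | k + 2, v => ⋃ u ∈ G.Fk (k + 1) v, G.fk (k + 1) u

/-- `r` is `k`-cornered by `c`: for `k = 0`, `c = r`; for `k ≥ 1`, some
`r' ∈ Fₖ(r)` is cornered by `c` in the subgraph induced by `V(Gₖ) ∪ {c}`. -/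
def kCornered (G : RefGraph V) : ℕ → V → V → Prop
  | 0, c, r => c = r
  | k + 1, c, r => ∃ r' ∈ G.Fk (k + 1) r,
      ∀ u, (u ∈ G.GkSet (k + 1) ∨ u = c) → G.Adj r' u → G.Adj c u

/-- With the cop at `c`, the vertex `r` is `k`-proj-safe: `cr r ≥ k` and some
`c' ∈ Fₖ(c)` is not adjacent to `r`. -/
def ProjSafe (G : RefGraph V) (k : ℕ) (c r : V) : Prop :=
  (k : ℕ∞) ≤ G.cr r ∧ ∃ c' ∈ G.Fk k c, ¬ G.Adj c' r

/-- The cop at `c` can win within `k` cop moves against the robber at `r`,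
robber to move. -/
def WinWithin (G : RefGraph V) : ℕ → V → V → Prop
  | 0, c, r => c = r
  | k + 1, c, r => c = r ∨ ∀ r₁, G.Adj r r₁ → ∃ c₁, G.Adj c c₁ ∧ G.WinWithin k c₁ r₁

/-- The cop at `c` can guarantee catching the robber at `r` within `n` cop
moves, cop to move. -/
def CanCatch (G : RefGraph V) : ℕ → V → V → Prop
  | 0, c, r => c = r
  | n + 1, c, r => c = r ∨ ∃ c', G.Adj c c' ∧
      (c' = r ∨ ∀ r', G.Adj r r' → G.CanCatch n c' r')

/-- The cop has a winning strategy: some initial placement from which she can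
guarantee capture in some bounded number of moves, whatever the robber does. -/
def CopWin (G : RefGraph V) : Prop :=
  ∃ (n : ℕ) (c₀ : V), ∀ r₀ : V, G.CanCatch n c₀ r₀

/-- The capture time: the least `n` such that the cop has an initial placement
guaranteeing capture within `n` cop moves. -/
noncomputable def capt (G : RefGraph V) : ℕ :=
  sInf {n : ℕ | ∃ c₀ : V, ∀ r₀ : V, G.CanCatch n c₀ r₀}

/-- A graph of finite corner rank `α` is `1`-cop-win if some vertex of corner
rank `α` is adjacent to every vertex of `G_{α-1}`. -/
def OneCopWin (G : RefGraph V) (α : ℕ) : Prop :=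
  ∃ x, G.cr x = (α : ℕ∞) ∧ ∀ u, ((α - 1 : ℕ) : ℕ∞) ≤ G.cr u → G.Adj x u

/-- `r`-cop-win for `r ∈ {0,1}`. -/
def RCopWin (G : RefGraph V) (r α : ℕ) : Prop :=
  (r = 1 ∧ G.OneCopWin α) ∨ (r = 0 ∧ ¬ G.OneCopWin α)

/-- The largest finite corner rank occurring in `G` (0 if none occurs). -/
noncomputable def gammaMax (G : RefGraph V) : ℕ :=
  sSup {n : ℕ | ∃ v, G.cr v = (n : ℕ∞)}

/-- `F_∞`: equal to `F_{γ+1}` where `γ` is the largest finite corner rank, and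
the identity (`F₁`) when no vertex has finite corner rank. -/
noncomputable def Finf (G : RefGraph V) : V → Set V :=
  G.Fk (G.gammaMax + 1)

/-- `e` lists the vertices as a dismantling ordering: every vertex except the
last is cornered, in the induced subgraph on it and the later vertices, by some
later vertex. -/
def IsDismantlingOrdering (G : RefGraph V) {n : ℕ} (e : Fin n ≃ V) : Prop :=
  ∀ i : Fin n, (i : ℕ) + 1 < n →
    ∃ j : Fin n, i < j ∧ e j ≠ e i ∧
      ∀ u, (∃ m : Fin n, i ≤ m ∧ e m = u) → G.Adj (e i) u → G.Adj (e j) u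

/-- `G` has a dismantling ordering. -/
def HasDismantling (G : RefGraph V) [Fintype V] : Prop :=
  ∃ e : Fin (Fintype.card V) ≃ V, G.IsDismantlingOrdering e

end RefGraph
namespace RefGraph

variable {V : Type*} (G : RefGraph V)

lemma lvl_succ_subset (m : ℕ) : G.lvl (m+1) ⊆ G.lvl m := fun _ hv => hv.1

lemma lvl_subset_of_le {m n : ℕ} (h : m ≤ n) : G.lvl n ⊆ G.lvl m := by
  induction n with
  | zero =>
    have : m = 0 := Nat.le_zero.mp h
    subst this; exact fun v hv => hv
  | succ n ih =>
    rcases Nat.lt_or_ge m (n+1) with h' | h'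
    · exact (G.lvl_succ_subset n).trans (ih (by omega))
    · have : m = n + 1 := le_antisymm h h'
      subst this; exact fun v hv => hv

lemma cr_le_succ_of_mem {v : V} {m : ℕ} (h : v ∈ G.lvl m)
    (h2 : G.IsStrictCorner (G.lvl m) v ∨ G.IsCliqueSet (G.lvl m)) :
    G.cr v ≤ (m : ℕ∞) + 1 :=
  sInf_le ⟨m, rfl, h, h2⟩

lemma cr_le_of_not_mem_lvl {v : V} : ∀ {m : ℕ}, v ∉ G.lvl m → G.cr v ≤ (m : ℕ∞)
  | 0, h => absurd (Set.mem_univ v) h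
  | m+1, h => by
    by_cases hm : v ∈ G.lvl m
    · have hsc : G.IsStrictCorner (G.lvl m) v := by
        by_contra hns
        exact h ⟨hm, hns⟩
      have := G.cr_le_succ_of_mem hm (Or.inl hsc)
      simpa using this
    · have := cr_le_of_not_mem_lvl hm
      refine this.trans ?_
      exact_mod_cast Nat.le_succ m

lemma mem_lvl_of_cr {v : V} {m : ℕ} (h : ((m : ℕ∞)) + 1 ≤ G.cr v) : v ∈ G.lvl m := by
  by_contra hn
  have h2 := G.cr_le_of_not_mem_lvl hn
  have h3 : (m : ℕ∞) + 1 ≤ (m : ℕ∞) := h.trans h2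
  have h4 : ((m + 1 : ℕ) : ℕ∞) ≤ ((m : ℕ) : ℕ∞) := by push_cast; exact h3
  have : m + 1 ≤ m := by exact_mod_cast h4
  omega

lemma le_cr_of_mem_lvl {v : V} {m : ℕ}
    (hnc : ∀ j < m, ¬ G.IsCliqueSet (G.lvl j)) (h : v ∈ G.lvl m) :
    (m : ℕ∞) + 1 ≤ G.cr v := by
  refine le_sInf ?_
  rintro n ⟨j, rfl, hvj, hj⟩
  have hmj : m ≤ j := by
    by_contra hlt
    push_neg at hlt
    rcases hj with hsc | hcl
    · have hv1 : v ∈ G.lvl (j + 1) := G.lvl_subset_of_le hlt h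
      exact hv1.2 hsc
    · exact hnc j hlt hcl
  exact add_le_add_left (by exact_mod_cast hmj) 1

lemma one_le_cr (v : V) : 1 ≤ G.cr v := by
  refine le_sInf ?_
  rintro n ⟨j, rfl, -, -⟩
  exact le_add_self

lemma cr_le_of_clique {j : ℕ} (hcl : G.IsCliqueSet (G.lvl j)) (v : V) :
    G.cr v ≤ (j : ℕ∞) + 1 := by
  by_cases hv : v ∈ G.lvl j
  · exact G.cr_le_succ_of_mem hv (Or.inr hcl)
  · exact (G.cr_le_of_not_mem_lvl hv).trans (by exact le_self_add)

lemma exists_good_corner [Fintype V] {S : Set V} {u : V}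
    (h : G.IsStrictCorner S u) :
    ∃ w, G.StrictCornersIn S w u ∧ ¬ G.IsStrictCorner S w := by
  classical
  obtain ⟨w₀, hw₀⟩ := h
  set f : V → ℕ := fun w => (Finset.univ.filter (fun x => x ∈ S ∧ G.Adj w x)).card with hf
  obtain ⟨w, hw, hmax⟩ := Finset.exists_max_image
    (Finset.univ.filter (fun w => G.StrictCornersIn S w u)) f ⟨w₀, by simpa using hw₀⟩
  simp only [Finset.mem_filter, Finset.mem_univ, true_and] at hw
  refine ⟨w, hw, ?_⟩
  rintro ⟨w', hw'⟩
  have hsc' : G.StrictCornersIn S w' u := by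
    obtain ⟨x, hxS, hxw', hxu⟩ := hw.2.2.2
    exact ⟨hw'.1, hw.2.1, fun y hy hadj => hw'.2.2.1 y hy (hw.2.2.1 y hy hadj),
      ⟨x, hxS, hw'.2.2.1 x hxS hxw', hxu⟩⟩
  have hlt : f w < f w' := by
    apply Finset.card_lt_card
    constructor
    · intro x hx
      simp only [Finset.mem_filter, Finset.mem_univ, true_and] at hx ⊢
      exact ⟨hx.1, hw'.2.2.1 x hx.1 hx.2⟩
    · intro hsub
      obtain ⟨x, hxS, hxw', hxw⟩ := hw'.2.2.2
      have := hsub (by simp [hxS, hxw'] : x ∈ Finset.univ.filter (fun y => y ∈ S ∧ G.Adj w' y))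
      simp only [Finset.mem_filter, Finset.mem_univ, true_and] at this
      exact hxw this.2
  have := hmax w' (by simpa using hsc')
  omega

variable {α : ℕ}

/-- No level before the final one is a clique, when `crGraph = α`. -/
lemma not_clique_of_crGraph [Fintype V] [Nonempty V] (hα : G.crGraph = (α : ℕ∞))
    {j : ℕ} (hj : j + 1 < α) : ¬ G.IsCliqueSet (G.lvl j) := by
  intro hcl
  obtain ⟨x, -, hx⟩ := Finset.exists_mem_eq_sup Finset.univ Finset.univ_nonempty
    (fun v => G.cr v)
  have hxα : G.cr x = (α : ℕ∞) := by rw [← hx, ← hα]; rfl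
  have := G.cr_le_of_clique hcl x
  rw [hxα] at this
  have h2 : ((α : ℕ) : ℕ∞) ≤ ((j + 1 : ℕ) : ℕ∞) := by push_cast; exact this
  have : α ≤ j + 1 := by exact_mod_cast h2
  omega

lemma GkSet_eq_lvl [Fintype V] [Nonempty V] (hα : G.crGraph = (α : ℕ∞))
    {j : ℕ} (hj : j + 1 ≤ α) : G.GkSet (j + 1) = G.lvl j := by
  apply Set.eq_of_subset_of_subset
  · intro v hv
    exact G.mem_lvl_of_cr (by
      have : ((j + 1 : ℕ) : ℕ∞) ≤ G.cr v := hv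
      push_cast at this; exact this)
  · intro v hv
    have := G.le_cr_of_mem_lvl (fun i hi => G.not_clique_of_crGraph hα (by omega)) hv
    show ((j + 1 : ℕ) : ℕ∞) ≤ G.cr v
    push_cast
    exact this

lemma fk_good [Fintype V] [Nonempty V] (hα : G.crGraph = (α : ℕ∞))
    {j : ℕ} (hj : j + 2 ≤ α) {u : V} (hu : u ∈ G.GkSet (j + 1)) :
    (G.fk (j + 1) u).Nonempty ∧ G.fk (j + 1) u ⊆ G.GkSet (j + 2) := by
  by_cases h : ((j + 1 : ℕ) : ℕ∞) < G.cr u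
  · rw [fk, if_pos h]
    refine ⟨⟨u, rfl⟩, ?_⟩
    intro w hw
    rcases hw with rfl
    show ((j + 2 : ℕ) : ℕ∞) ≤ G.cr w
    have : ((j + 1 : ℕ) : ℕ∞) + 1 ≤ G.cr w := Order.add_one_le_of_lt h
    refine le_trans (le_of_eq ?_) this
    push_cast; ring
  · rw [fk, if_neg h]
    push_neg at h
    have hcr : G.cr u = ((j + 1 : ℕ) : ℕ∞) := le_antisymm h hu
    -- get the witness from sInf
    have hlt : G.cr u < ((j + 1 : ℕ) : ℕ∞) + 1 := by
      rw [hcr]; exact_mod_cast Nat.lt_succ_self (j + 1)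
    obtain ⟨n, hn, hnlt⟩ := sInf_lt_iff.mp hlt
    obtain ⟨m, rfl, hmem, hsc⟩ := hn
    have hmj : m = j := by
      have h1 : ((j + 1 : ℕ) : ℕ∞) ≤ (m : ℕ∞) + 1 := hcr ▸ sInf_le ⟨m, rfl, hmem, hsc⟩
      have hjm : j + 1 ≤ m + 1 := by exact_mod_cast h1
      have hmj2 : m + 1 < j + 1 + 1 := by exact_mod_cast hnlt
      omega
    subst hmj
    rcases hsc with hsc | hcl
    · obtain ⟨w, hw1, hw2⟩ := G.exists_good_corner hsc
      have hwlvl : w ∈ G.lvl (m + 1) := ⟨hw1.1, hw2⟩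
      have hwG : w ∈ G.GkSet (m + 2) := by
        rw [G.GkSet_eq_lvl hα (by omega)]
        exact hwlvl
      have hset : G.GkSet (m + 1) = G.lvl m := G.GkSet_eq_lvl hα (by omega)
      refine ⟨⟨w, hwG, by rw [hset]; exact hw1⟩, ?_⟩
      intro y hy
      exact hy.1
    · exact absurd hcl (G.not_clique_of_crGraph hα (by omega))

lemma Fk_good [Fintype V] [Nonempty V] (hα : G.crGraph = (α : ℕ∞)) (c : V) :
    ∀ j : ℕ, j + 3 ≤ α → (G.Fk (j + 1) c).Nonempty ∧ G.Fk (j + 1) c ⊆ G.GkSet (j + 1)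
  | 0, _ => by
    refine ⟨⟨c, rfl⟩, ?_⟩
    intro w hw
    rcases hw with rfl
    show ((1 : ℕ) : ℕ∞) ≤ G.cr w
    simpa using G.one_le_cr w
  | j+1, hj => by
    obtain ⟨hne, hsub⟩ := Fk_good hα c j (by omega)
    rw [show j + 1 + 1 = j + 2 from rfl, Fk]
    constructor
    · obtain ⟨u, hu⟩ := hne
      obtain ⟨⟨w, hw⟩, -⟩ := G.fk_good hα (by omega : j + 2 ≤ α) (hsub hu)
      exact ⟨w, Set.mem_biUnion hu hw⟩
    · intro w hw
      simp only [Set.mem_iUnion] at hw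
      obtain ⟨u, hu, hw⟩ := hw
      exact (G.fk_good hα (by omega : j + 2 ≤ α) (hsub hu)).2 hw

end RefGraph

/-- If `G` is `1`-cop-win of finite corner rank `α > 2`, then for
every cop position `c` there is an `(α-2)`-proj-safe vertex: some `r` with
`cr(r) ≥ α - 2` and some `c' ∈ F_{α-2}(c)` not adjacent to `r`. -/
theorem proj_safe_start_one_cop_win
    {V : Type*} [Fintype V] [Nonempty V] (G : RefGraph V)
    (α : ℕ) (hα2 : 2 < α) (hα : G.crGraph = (α : ℕ∞))
    (h1 : G.OneCopWin α) :
    ∀ c : V, ∃ r : V, ((α - 2 : ℕ) : ℕ∞) ≤ G.cr r ∧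
      ∃ c' ∈ G.Fk (α - 2) c, ¬ G.Adj c' r := by
  intro c
  obtain ⟨a, rfl⟩ : ∃ a, α = a + 3 := ⟨α - 3, by omega⟩
  have hsub2 : a + 3 - 2 = a + 1 := rfl
  rw [hsub2]
  obtain ⟨⟨c', hc'⟩, hFsub⟩ := G.Fk_good hα c a (by omega)
  by_contra hcon
  push_neg at hcon
  have hc'G : c' ∈ G.GkSet (a + 1) := hFsub hc'
  have hlvl_eq : G.GkSet (a + 1) = G.lvl a := G.GkSet_eq_lvl hα (by omega)
  have hdom : ∀ x ∈ G.lvl a, G.Adj c' x := by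
    intro x hx
    exact hcon x (by rw [← hlvl_eq] at hx; exact hx) c' hc'
  have hclique : G.IsCliqueSet (G.lvl (a + 1)) := by
    intro u hu v hv
    have hu1 : u ∈ G.lvl a := hu.1
    have hv1 : v ∈ G.lvl a := hv.1
    by_cases hex : ∃ x ∈ G.lvl a, G.Adj c' x ∧ ¬ G.Adj u x
    · exact absurd ⟨c', hlvl_eq ▸ hc'G, hu1, fun y hy _ => hdom y hy, hex⟩ hu.2
    · push_neg at hex
      exact hex v hv1 (hdom v hv1)
  exact G.not_clique_of_crGraph hα (by omega) hclique
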